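/- Parallel composition recurrence: Let the series-parallel digraph G_v be the parallel composition of G_x and G_y (origins and targets identified). The restricted robust flow problem on G_v with supply vector s~_v and budget vector c~_v is feasible if and only if there exist supply vectors s~_x, s~_y and budget vectors c~_x, c~_y with s~_v = s~_x + s~_y (componentwise) and c~_v = c~_x + c~_y such that the restricted problems on G_x with (s~_x, c~_x) and on G_y with (s~_y, c~_y) are both feasible. Equivalently, d_v(s~_v, c~_v) = min over all such splittings of d_x(s~_x, c~_x) + d_y(s~_y, c~_y). -/

import Mathlib

open Finset

structure Net (V A : Type) where
  src : A → V
  dst : A → V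
  isFixed : A → Bool
  u : A → ℤ
  c : A → ℤ

variable {V A : Type} [Fintype V] [Fintype A] [DecidableEq V]

def excess (N : Net V A) (f : A → ℤ) (v : V) : ℤ :=
  ∑ a ∈ univ.filter (fun a => N.src a = v), f a -
    ∑ a ∈ univ.filter (fun a => N.dst a = v), f a

def cost (N : Net V A) (f : A → ℤ) : ℤ := ∑ a, N.c a * f a

/-- A vertex is incident to the (sub)graph if some arc starts or ends there. -/
def Incident (N : Net V A) (v : V) : Prop := ∃ a, N.src a = v ∨ N.dst a = v

instance (N : Net V A) (v : V) : Decidable (Incident N v) :=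
  inferInstanceAs (Decidable (∃ a, N.src a = v ∨ N.dst a = v))

/-- The `(st, ct)`-restricted robust minimum cost flow problem on a subgraph with
origin `o` and target `q` is feasible (demand label `0`): there are integral scenario
flows within capacities, agreeing on fixed arcs, with excess `st^λ` at the origin and
excess `b^λ(w)` at every other vertex of the subgraph except the target, whose
scenario costs exactly meet the budgets `ct^λ`. -/
def RestFeasible {Λ : Type} (N : Net V A) (o q : V) (b : Λ → V → ℤ)
    (st ct : Λ → ℤ) : Prop :=
  ∃ f : Λ → A → ℤ,
    (∀ lam a, 0 ≤ f lam a ∧ f lam a ≤ N.u a) ∧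
    (∀ lam lam' a, N.isFixed a = true → f lam a = f lam' a) ∧
    (∀ lam, excess N (f lam) o = st lam) ∧
    (∀ lam v, v ≠ o → v ≠ q → Incident N v → excess N (f lam) v = b lam v) ∧
    (∀ lam, cost N (f lam) = ct lam)

/-- The combined network on the disjoint union of the arc sets of two subgraphs
sharing the vertex type `V` (used for series and parallel compositions). -/
def combineNet {Ax Ay : Type} (Nx : Net V Ax) (Ny : Net V Ay) : Net V (Ax ⊕ Ay) where
  src := Sum.elim Nx.src Ny.src
  dst := Sum.elim Nx.dst Ny.dst
  isFixed := Sum.elim Nx.isFixed Ny.isFixed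
  u := Sum.elim Nx.u Ny.u
  c := Sum.elim Nx.c Ny.c

lemma excess_combine {Ax Ay : Type} [Fintype Ax] [Fintype Ay]
    (Nx : Net V Ax) (Ny : Net V Ay) (f : Ax ⊕ Ay → ℤ) (v : V) :
    excess (combineNet Nx Ny) f v =
      excess Nx (f ∘ Sum.inl) v + excess Ny (f ∘ Sum.inr) v := by
  rw [excess, Finset.sum_filter, Finset.sum_filter]
  simp only [excess, combineNet, Finset.sum_filter, Fintype.sum_sum_type,
    Sum.elim_inl, Sum.elim_inr, Function.comp]
  ring!

lemma cost_combine {Ax Ay : Type} [Fintype Ax] [Fintype Ay]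
    (Nx : Net V Ax) (Ny : Net V Ay) (f : Ax ⊕ Ay → ℤ) :
    cost (combineNet Nx Ny) f = cost Nx (f ∘ Sum.inl) + cost Ny (f ∘ Sum.inr) := by
  simp [cost, combineNet, Fintype.sum_sum_type]

lemma excess_not_incident (N : Net V A) (f : A → ℤ) (v : V) (h : ¬ Incident N v) :
    excess N f v = 0 := by
  have h1 : univ.filter (fun a => N.src a = v) = ∅ :=
    Finset.filter_eq_empty_iff.mpr (fun a _ ha => h ⟨a, Or.inl ha⟩)
  have h2 : univ.filter (fun a => N.dst a = v) = ∅ :=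
    Finset.filter_eq_empty_iff.mpr (fun a _ ha => h ⟨a, Or.inr ha⟩)
  simp [excess, h1, h2]

lemma incident_combine {Ax Ay : Type} (Nx : Net V Ax) (Ny : Net V Ay) (v : V) :
    Incident (combineNet Nx Ny) v ↔ Incident Nx v ∨ Incident Ny v := by
  constructor
  · rintro ⟨a | a, h⟩
    · exact Or.inl ⟨a, h⟩
    · exact Or.inr ⟨a, h⟩
  · rintro (⟨a, h⟩ | ⟨a, h⟩)
    · exact ⟨Sum.inl a, h⟩
    · exact ⟨Sum.inr a, h⟩

/-- Lemma 5 of the paper, parallel composition recurrence: if `G_v` is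
the parallel composition of `G_x` and `G_y` (same origin `o` and target `q`, interior
vertices disjoint), then the restricted problem on `G_v` with supplies `st` and
budgets `ct` is feasible iff these can be split as `st = sx + sy`, `ct = cx + cy` with
both restricted subproblems feasible. -/
theorem dp_parallel_recurrence {Ax Ay Λ : Type} [Fintype Ax] [Fintype Ay]
    (Nx : Net V Ax) (Ny : Net V Ay) (o q : V) (hoq : o ≠ q)
    (hdisj : ∀ v, v ≠ o → v ≠ q → ¬(Incident Nx v ∧ Incident Ny v))
    (b : Λ → V → ℤ) (st ct : Λ → ℤ) :
    RestFeasible (combineNet Nx Ny) o q b st ct ↔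
      ∃ sx sy cx cy : Λ → ℤ,
        (∀ lam, st lam = sx lam + sy lam) ∧
        (∀ lam, ct lam = cx lam + cy lam) ∧
        RestFeasible Nx o q b sx cx ∧
        RestFeasible Ny o q b sy cy := by
  constructor
  · rintro ⟨f, hbd, hfix, ho, hint, hc⟩
    refine ⟨fun lam => excess Nx (f lam ∘ Sum.inl) o,
            fun lam => excess Ny (f lam ∘ Sum.inr) o,
            fun lam => cost Nx (f lam ∘ Sum.inl),
            fun lam => cost Ny (f lam ∘ Sum.inr), ?_, ?_, ?_, ?_⟩
    · intro lam; rw [← ho lam, excess_combine]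
    · intro lam; rw [← hc lam, cost_combine]
    · refine ⟨fun lam => f lam ∘ Sum.inl,
        fun lam a => hbd lam (Sum.inl a),
        fun lam lam' a hf => hfix lam lam' (Sum.inl a) hf,
        fun lam => rfl, ?_, fun lam => rfl⟩
      intro lam v hvo hvq hvx
      have hny : ¬ Incident Ny v := fun hy => hdisj v hvo hvq ⟨hvx, hy⟩
      have := hint lam v hvo hvq ((incident_combine Nx Ny v).mpr (Or.inl hvx))
      rw [excess_combine, excess_not_incident Ny _ v hny, add_zero] at this
      exact this
    · refine ⟨fun lam => f lam ∘ Sum.inr,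
        fun lam a => hbd lam (Sum.inr a),
        fun lam lam' a hf => hfix lam lam' (Sum.inr a) hf,
        fun lam => rfl, ?_, fun lam => rfl⟩
      intro lam v hvo hvq hvy
      have hnx : ¬ Incident Nx v := fun hx => hdisj v hvo hvq ⟨hx, hvy⟩
      have := hint lam v hvo hvq ((incident_combine Nx Ny v).mpr (Or.inr hvy))
      rw [excess_combine, excess_not_incident Nx _ v hnx, zero_add] at this
      exact this
  · rintro ⟨sx, sy, cx, cy, hs, hcc, ⟨fx, hbx, hfx, hox, hix, hcx⟩,
      ⟨fy, hby, hfy, hoy, hiy, hcy⟩⟩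
    refine ⟨fun lam => Sum.elim (fx lam) (fy lam), ?_, ?_, ?_, ?_, ?_⟩
    · rintro lam (a | a)
      · exact hbx lam a
      · exact hby lam a
    · rintro lam lam' (a | a) hf
      · exact hfx lam lam' a hf
      · exact hfy lam lam' a hf
    · intro lam
      rw [excess_combine]
      have h1 : (Sum.elim (fx lam) (fy lam)) ∘ Sum.inl = fx lam := rfl
      have h2 : (Sum.elim (fx lam) (fy lam)) ∘ Sum.inr = fy lam := rfl
      rw [h1, h2, hox lam, hoy lam, hs lam]
    · intro lam v hvo hvq hv
      rw [excess_combine]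
      have h1 : (Sum.elim (fx lam) (fy lam)) ∘ Sum.inl = fx lam := rfl
      have h2 : (Sum.elim (fx lam) (fy lam)) ∘ Sum.inr = fy lam := rfl
      rw [h1, h2]
      rcases (incident_combine Nx Ny v).mp hv with hvx | hvy
      · have hny : ¬ Incident Ny v := fun hy => hdisj v hvo hvq ⟨hvx, hy⟩
        rw [hix lam v hvo hvq hvx, excess_not_incident Ny _ v hny, add_zero]
      · have hnx : ¬ Incident Nx v := fun hx => hdisj v hvo hvq ⟨hx, hvy⟩
        rw [hiy lam v hvo hvq hvy, excess_not_incident Nx _ v hnx, zero_add]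
    · intro lam
      rw [cost_combine]
      have h1 : (Sum.elim (fx lam) (fy lam)) ∘ Sum.inl = fx lam := rfl
      have h2 : (Sum.elim (fx lam) (fy lam)) ∘ Sum.inr = fy lam := rfl
      rw [h1, h2, hcx lam, hcy lam, hcc lam]
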